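/- Let n ≥ 2 and let σ = Equiv.swap a b be a transposition of Fin n (a ≠ b). Then for every k : ℕ, twice the number of 2-cycles in the cycle decomposition of σ^{⊙k} equals multichoose n k − ∑_{ℓ=0}^{⌊k/2⌋} multichoose (n − 2) (k − 2ℓ), i.e., 2 * C_2(σ^{⊙k}) = multichoose n k − ∑_{ℓ=0}^{⌊k/2⌋} multichoose (n − 2) (k − 2ℓ). -/

import Mathlib

/-- The `k`-th symmetric tensor power of a permutation `σ` of `Fin n`: the permutation of
`Sym (Fin n) k` sending a multiset `m` to `Sym.map σ m`. -/
def Equiv.Perm.symPow {n : ℕ} (σ : Equiv.Perm (Fin n)) (k : ℕ) :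
    Equiv.Perm (Sym (Fin n) k) :=
  (Sym.equivCongr σ : Sym (Fin n) k ≃ Sym (Fin n) k)

/-- The number of fixed points of a permutation of a finite type. -/
def fixCount {α : Type*} [Fintype α] [DecidableEq α] (τ : Equiv.Perm α) : ℕ :=
  Fintype.card {x : α // τ x = x}

/-- `cycleCount τ s` is the number of cycles of length `s` in the cycle decomposition of `τ`;
for `s = 1` this is the number of fixed points. -/
def cycleCount {α : Type*} [Fintype α] [DecidableEq α] (τ : Equiv.Perm α) (s : ℕ) : ℕ :=
  if s = 1 then fixCount τ
  else (τ.cycleFactorsFinset.filter (fun c => c.support.card = s)).card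

open Multiset Equiv Finset in
lemma invol_count {α : Type*} [Fintype α] [DecidableEq α] (τ : Equiv.Perm α)
    (hτ : ∀ x, τ (τ x) = x) : 2 * cycleCount τ 2 + fixCount τ = Fintype.card α := by
  have hsupp : ∀ c ∈ τ.cycleFactorsFinset, c.support.card = 2 := by
    intro c hc
    obtain ⟨hcyc, hagree⟩ := Equiv.Perm.mem_cycleFactorsFinset_iff.mp hc
    have hc2 : c ^ 2 = 1 := by
      ext x
      rw [pow_two]
      by_cases hx : x ∈ c.support
      · have hx2 : c x ∈ c.support := Equiv.Perm.apply_mem_support.mpr hx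
        simp only [Equiv.Perm.mul_apply, Equiv.Perm.one_apply]
        rw [hagree _ hx2, hagree _ hx, hτ]
      · have := Equiv.Perm.notMem_support.mp hx
        simp [Equiv.Perm.mul_apply, this]
    have hord : orderOf c = 2 := by
      have h1 : orderOf c ∣ 2 := orderOf_dvd_of_pow_eq_one hc2
      rcases (Nat.prime_two.eq_one_or_self_of_dvd _ h1) with h | h
      · exact absurd (orderOf_eq_one_iff.mp h) hcyc.ne_one
      · exact h
    rw [← hcyc.orderOf, hord]
  have hfilter : τ.cycleFactorsFinset.filter (fun c => c.support.card = 2) = τ.cycleFactorsFinset :=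
    Finset.filter_true_of_mem hsupp
  have hcc : cycleCount τ 2 = τ.cycleFactorsFinset.card := by
    rw [cycleCount]; simp [hfilter]
  have hsum : τ.support.card = 2 * τ.cycleFactorsFinset.card := by
    rw [← Equiv.Perm.sum_cycleType, Equiv.Perm.cycleType]
    have : (τ.cycleFactorsFinset.val.map (Finset.card ∘ Equiv.Perm.support)).sum
        = ∑ c ∈ τ.cycleFactorsFinset, c.support.card := rfl
    rw [this, Finset.sum_congr rfl hsupp, Finset.sum_const, smul_eq_mul, mul_comm]
  have hfix : fixCount τ = (Finset.univ.filter (fun x => τ x = x)).card := by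
    rw [fixCount, Fintype.card_subtype]
  have hsupp2 : τ.support = Finset.univ.filter (fun x => τ x ≠ x) := by
    ext x; simp [Equiv.Perm.mem_support]
  have heq := Finset.card_filter_add_card_filter_not (s := (Finset.univ : Finset α))
    (p := fun x => τ x = x)
  have hsc : τ.support.card = (Finset.univ.filter (fun a => ¬ τ a = a)).card := by
    rw [hsupp2]
  rw [hcc, hfix, ← Finset.card_univ]
  omega


open Multiset
-- decomposition of the "bad" part
lemma key_decomp {n : ℕ} (a b : Fin n) (hab : a ≠ b) (m : Multiset (Fin n)) :
    m.filter (fun x => ¬(x ≠ a ∧ x ≠ b)) = replicate (count a m) a + replicate (count b m) b := by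
  ext x
  rw [count_filter, count_add, count_replicate, count_replicate]
  by_cases hxa : x = a
  · subst hxa; simp [hab, Ne.symm hab]
  · by_cases hxb : x = b
    · subst hxb; simp [hab, Ne.symm hab]
    · simp [hxa, hxb, Ne.symm hxa, Ne.symm hxb]

lemma map_swap_eq_iff {n : ℕ} (a b : Fin n) (m : Multiset (Fin n)) :
    m.map (Equiv.swap a b) = m ↔ count a m = count b m := by
  constructor
  · intro h
    have := Multiset.count_map_eq_count' (Equiv.swap a b) m (Equiv.injective _) b
    rw [h, Equiv.swap_apply_right] at this
    exact this
  · intro h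
    ext x
    have := Multiset.count_map_eq_count' (Equiv.swap a b) m (Equiv.injective _)
      ((Equiv.swap a b) x)
    rw [Equiv.swap_apply_self] at this
    rw [this]
    rcases eq_or_ne x a with rfl | hxa
    · rw [Equiv.swap_apply_left]; exact h.symm
    rcases eq_or_ne x b with rfl | hxb
    · rw [Equiv.swap_apply_right]; exact h
    · rw [Equiv.swap_apply_of_ne_of_ne hxa hxb]

lemma cardS {n : ℕ} (a b : Fin n) (hab : a ≠ b) :
    Fintype.card {x : Fin n // x ≠ a ∧ x ≠ b} = n - 2 := by
  rw [Fintype.card_subtype]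
  have h1 : Finset.univ.filter (fun x : Fin n => x ≠ a ∧ x ≠ b)
      = ({a, b} : Finset (Fin n))ᶜ := by
    ext x; simp [not_or]
  rw [h1, Finset.card_compl]
  have : ({a, b} : Finset (Fin n)).card = 2 := by
    rw [Finset.card_insert_of_notMem (by simp [hab]), Finset.card_singleton]
  rw [this, Fintype.card_fin]

def toSub {n : ℕ} (a b : Fin n) (m : Multiset (Fin n)) :
    Multiset {x : Fin n // x ≠ a ∧ x ≠ b} :=
  (m.filter (fun x => x ≠ a ∧ x ≠ b)).attach.map
    (fun x => ⟨x.1, by have h := Multiset.mem_filter.mp x.2; exact h.2⟩)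

lemma map_val_toSub {n : ℕ} (a b : Fin n) (m : Multiset (Fin n)) :
    (toSub a b m).map Subtype.val = m.filter (fun x => x ≠ a ∧ x ≠ b) := by
  rw [toSub, Multiset.map_map]
  exact Multiset.attach_map_val _

lemma card_toSub {n : ℕ} (a b : Fin n) (m : Multiset (Fin n)) :
    Multiset.card (toSub a b m) = Multiset.card (m.filter (fun x => x ≠ a ∧ x ≠ b)) := by
  rw [toSub, Multiset.card_map, Multiset.card_attach]

lemma fiber_card {n k ℓ : ℕ} (a b : Fin n) (hab : a ≠ b) (hℓ : 2 * ℓ ≤ k) :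
    (Finset.univ.filter (fun m : Sym (Fin n) k =>
      count (α := Fin n) a m = count b m ∧ count (α := Fin n) a m = ℓ)).card
      = Nat.multichoose (n - 2) (k - 2 * ℓ) := by
  classical
  rw [← cardS a b hab, ← Sym.card_sym_eq_multichoose {x : Fin n // x ≠ a ∧ x ≠ b} (k - 2*ℓ),
    ← Finset.card_univ]
  have hfc : ∀ m ∈ (Finset.univ.filter (fun m : Sym (Fin n) k =>
      count (α := Fin n) a m = count b m ∧ count (α := Fin n) a m = ℓ)),
      Multiset.card ((m : Multiset (Fin n)).filter (fun x => x ≠ a ∧ x ≠ b)) = k - 2 * ℓ := by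
    intro m hm
    obtain ⟨-, hcab, hca⟩ := Finset.mem_filter.mp hm
    have hdec := key_decomp a b hab (m : Multiset (Fin n))
    have hcard := congrArg Multiset.card
      (Multiset.filter_add_not (fun x : Fin n => x ≠ a ∧ x ≠ b) (m : Multiset (Fin n)))
    rw [Multiset.card_add, hdec, Multiset.card_add, Multiset.card_replicate,
      Multiset.card_replicate, Sym.card_coe, hca, ← hcab, hca] at hcard
    omega
  refine Finset.card_bij'
    (fun m hm => (⟨toSub a b (m : Multiset (Fin n)), by rw [card_toSub]; exact hfc m hm⟩ :
      Sym {x : Fin n // x ≠ a ∧ x ≠ b} (k - 2*ℓ)))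
    (fun m' _ => (⟨(m' : Multiset {x : Fin n // x ≠ a ∧ x ≠ b}).map Subtype.val
        + replicate ℓ a + replicate ℓ b, by
      rw [Multiset.card_add, Multiset.card_add, Multiset.card_map, Multiset.card_replicate,
        Multiset.card_replicate, Sym.card_coe]
      omega⟩ : Sym (Fin n) k))
    (fun m hm => Finset.mem_univ _)
    (fun m' hm' => by
      have hca : count a ((m' : Multiset {x : Fin n // x ≠ a ∧ x ≠ b}).map Subtype.val
          + replicate ℓ a + replicate ℓ b) = ℓ := by
        rw [count_add, count_add, count_replicate, count_replicate,
          Multiset.count_eq_zero.2 (fun h => by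
            obtain ⟨x, -, hx⟩ := Multiset.mem_map.mp h; exact x.2.1 hx)]
        simp [hab, Ne.symm hab]
      have hcb : count b ((m' : Multiset {x : Fin n // x ≠ a ∧ x ≠ b}).map Subtype.val
          + replicate ℓ a + replicate ℓ b) = ℓ := by
        rw [count_add, count_add, count_replicate, count_replicate,
          Multiset.count_eq_zero.2 (fun h => by
            obtain ⟨x, -, hx⟩ := Multiset.mem_map.mp h; exact x.2.2 hx)]
        simp [hab, Ne.symm hab]
      exact Finset.mem_filter.mpr ⟨Finset.mem_univ _, hca.trans hcb.symm, hca⟩)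
    (fun m hm => by
      obtain ⟨-, hcab, hca⟩ := Finset.mem_filter.mp hm
      apply Sym.coe_injective
      show Multiset.map Subtype.val (toSub a b (m : Multiset (Fin n)))
          + replicate ℓ a + replicate ℓ b = (m : Multiset (Fin n))
      rw [map_val_toSub, add_assoc, ← hca]
      nth_rewrite 2 [hcab]
      rw [← key_decomp a b hab, Multiset.filter_add_not])
    (fun m' hm' => by
      apply Sym.coe_injective
      apply Multiset.map_injective (Subtype.val_injective)
      show Multiset.map Subtype.val (toSub a b
          ((m' : Multiset {x : Fin n // x ≠ a ∧ x ≠ b}).map Subtype.val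
            + replicate ℓ a + replicate ℓ b))
          = Multiset.map Subtype.val (m' : Multiset {x : Fin n // x ≠ a ∧ x ≠ b})
      rw [map_val_toSub, Multiset.filter_add, Multiset.filter_add]
      rw [Multiset.filter_eq_self.mpr (fun x hx => by
        obtain ⟨y, -, rfl⟩ := Multiset.mem_map.mp hx; exact y.2)]
      rw [Multiset.filter_eq_nil.mpr (fun x hx => by
        rw [Multiset.eq_of_mem_replicate hx]; simp)]
      rw [Multiset.filter_eq_nil.mpr (fun x hx => by
        rw [Multiset.eq_of_mem_replicate hx]; simp)]
      simp)

lemma fix_symPow {n k : ℕ} (a b : Fin n) (hab : a ≠ b) :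
    fixCount ((Equiv.swap a b).symPow k)
      = ∑ ℓ ∈ Finset.range (k / 2 + 1), Nat.multichoose (n - 2) (k - 2 * ℓ) := by
  classical
  have hiff : ∀ m : Sym (Fin n) k,
      (Equiv.swap a b).symPow k m = m ↔ count (α := Fin n) a m = count b m := by
    intro m
    rw [← map_swap_eq_iff]
    show Sym.map (Equiv.swap a b) m = m ↔ _
    rw [← Sym.coe_inj, Sym.coe_map]
  rw [fixCount, Fintype.card_subtype, Finset.filter_congr (fun m _ => by
    rw [hiff m])]
  rw [Finset.card_eq_sum_card_fiberwise (f := fun m : Sym (Fin n) k => count (α := Fin n) a m)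
    (t := Finset.range (k / 2 + 1)) (fun m hm => by
      obtain ⟨-, hcab⟩ := Finset.mem_filter.mp hm
      have hle := Multiset.card_le_card
        (Multiset.filter_le (fun x : Fin n => ¬(x ≠ a ∧ x ≠ b)) (m : Multiset (Fin n)))
      rw [key_decomp a b hab, Multiset.card_add, Multiset.card_replicate,
        Multiset.card_replicate, Sym.card_coe] at hle
      rw [Finset.mem_coe, Finset.mem_range]
      show count (α := Fin n) a (m : Multiset (Fin n)) < k / 2 + 1
      omega)]
  refine Finset.sum_congr rfl (fun ℓ hℓ => ?_)
  rw [Finset.filter_filter]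
  exact fiber_card a b hab (by have := Finset.mem_range.mp hℓ; omega)

theorem twoCycles_symPow_swap (n : ℕ) (hn : 2 ≤ n) (a b : Fin n) (hab : a ≠ b) (k : ℕ) :
    (2 * cycleCount ((Equiv.swap a b).symPow k) 2 : ℤ) =
      (Nat.multichoose n k : ℤ) -
        ∑ ℓ ∈ Finset.range (k / 2 + 1), (Nat.multichoose (n - 2) (k - 2 * ℓ) : ℤ) := by
  have hτ : ∀ m : Sym (Fin n) k,
      (Equiv.swap a b).symPow k ((Equiv.swap a b).symPow k m) = m := by
    intro m
    show Sym.map (Equiv.swap a b) (Sym.map (Equiv.swap a b) m) = m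
    rw [Sym.map_map]
    have hcomp : (⇑(Equiv.swap a b) ∘ ⇑(Equiv.swap a b)) = fun x : Fin n => x :=
      funext fun x => Equiv.swap_apply_self a b x
    rw [hcomp, Sym.map_id']
  have h1 := invol_count ((Equiv.swap a b).symPow k) hτ
  rw [Sym.card_sym_eq_multichoose, Fintype.card_fin] at h1
  have h2 := fix_symPow (k := k) a b hab
  rw [← Nat.cast_sum]
  omega
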